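/- Fix a real ρ > 0. For each integer n ≥ 2, let F_n(1) denote the binary freshness of a single node in the n-node ring network, defined through the backward recursion F_n(n) = 1/(1+ρ) and F_n(j) = (j/n + F_n(j+1)) / (1 + ρ + j/n) for j = 1, …, n−1. Then lim_{n→∞} n·F_n(1) = 1/ρ + 1/ρ²; i.e., in a ring network the average freshness of a single node decreases to 0 as (1/ρ + 1/ρ²)·n^{-1}. -/

import Mathlib

open Finset Filter

namespace RingFreshAux

noncomputable def a (ρ : ℝ) (n i : ℕ) : ℝ := 1 + ρ + (i : ℝ) / n

noncomputable def P (ρ : ℝ) (n j k : ℕ) : ℝ := ∏ i ∈ Finset.Ico j k, a ρ n i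

noncomputable def G (ρ : ℝ) (n j : ℕ) : ℝ :=
  (∑ k ∈ Finset.Ico j n, ((k : ℝ) / n) / P ρ n j (k + 1)) + (1 / (1 + ρ)) / P ρ n j n

lemma a_pos (ρ : ℝ) (hρ : 0 < ρ) (n i : ℕ) : 0 < a ρ n i := by
  have h : (0:ℝ) ≤ (i:ℝ)/n := by positivity
  unfold a; linarith

lemma P_pos (ρ : ℝ) (hρ : 0 < ρ) (n j k : ℕ) : 0 < P ρ n j k :=
  Finset.prod_pos fun i _ => a_pos ρ hρ n i

lemma P_succ_bot (ρ : ℝ) (n j k : ℕ) (h : j < k) :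
    P ρ n j k = a ρ n j * P ρ n (j+1) k :=
  Finset.prod_eq_prod_Ico_succ_bot h _

lemma G_rec (ρ : ℝ) (n j : ℕ) (hj : j < n) :
    G ρ n j = ((j:ℝ)/n + G ρ n (j+1)) / a ρ n j := by
  unfold G
  rw [Finset.sum_eq_sum_Ico_succ_bot hj]
  have hP1 : P ρ n j (j+1) = a ρ n j := by
    unfold P
    rw [Nat.Ico_succ_singleton, Finset.prod_singleton]
  have hsum : (∑ k ∈ Finset.Ico (j+1) n, ((k:ℝ)/n)/P ρ n j (k+1))
      = (∑ k ∈ Finset.Ico (j+1) n, ((k:ℝ)/n)/P ρ n (j+1) (k+1)) / a ρ n j := by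
    rw [Finset.sum_div]
    apply Finset.sum_congr rfl
    intro k hk
    have hk' : j < k + 1 := by
      simp only [Finset.mem_Ico] at hk; omega
    rw [P_succ_bot ρ n j (k+1) hk']
    ring
  rw [hP1, hsum, P_succ_bot ρ n j n hj]
  ring

lemma F_eq_G (ρ : ℝ) (n : ℕ) (f : ℕ → ℝ) (hn : 2 ≤ n)
    (h1 : f n = 1/(1+ρ))
    (h2 : ∀ j, 1 ≤ j → j ≤ n - 1 →
      f j = ((j:ℝ)/n + f (j+1))/(1+ρ+(j:ℝ)/n)) :
    f 1 = G ρ n 1 := by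
  suffices H : ∀ d j, 1 ≤ j → j + d = n → f j = G ρ n j by
    exact H (n-1) 1 le_rfl (by omega)
  intro d
  induction d with
  | zero =>
    intro j hj1 hjn
    have : j = n := by omega
    subst this
    rw [h1]
    unfold G P
    simp [Finset.Ico_self]
  | succ d ih =>
    intro j hj1 hjn
    have hjn' : j < n := by omega
    rw [h2 j hj1 (by omega), ih (j+1) (by omega) (by omega), G_rec ρ n j hjn']
    rfl

lemma bern (ρ : ℝ) (hρ : 0 < ρ) (k : ℕ) (c : ℝ) (hc : 0 ≤ c) :
    (1/(1+ρ))^k * (1 - (k:ℝ)*c) ≤ ((1+ρ+c)^k)⁻¹ := by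
  have hρ1 : (0:ℝ) < 1 + ρ := by linarith
  have hb : (0:ℝ) < 1 + ρ + c := by linarith
  set t : ℝ := (1+ρ)/(1+ρ+c) with ht
  have ht0 : 0 < t := by positivity
  have h1 : 1 + (k:ℝ)*(t-1) ≤ t^k := by
    have h := one_add_mul_le_pow (a := t-1) (by linarith) k
    simpa using h
  have ht1 : t - 1 = -(c/(1+ρ+c)) := by
    rw [ht]; field_simp; ring
  have h2 : 1 - (k:ℝ)*c ≤ 1 + (k:ℝ)*(t-1) := by
    have hcb : c/(1+ρ+c) ≤ c := by
      apply div_le_self hc; linarith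
    have hk0 : (0:ℝ) ≤ (k:ℝ) := Nat.cast_nonneg k
    rw [ht1]
    nlinarith
  have hq0 : (0:ℝ) ≤ (1/(1+ρ))^k := by positivity
  calc (1/(1+ρ))^k * (1 - (k:ℝ)*c)
      ≤ (1/(1+ρ))^k * (t^k) := by
        apply mul_le_mul_of_nonneg_left _ hq0
        linarith
    _ = ((1+ρ+c)^k)⁻¹ := by
        rw [← mul_pow]
        have : 1/(1+ρ) * t = (1+ρ+c)⁻¹ := by
          rw [ht]; field_simp
        rw [this, inv_pow]

lemma P_le (ρ : ℝ) (hρ : 0 < ρ) (n k : ℕ) (hn : 1 ≤ n) :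
    P ρ n 1 (k+1) ≤ (1+ρ+(k:ℝ)/n)^k := by
  have h := Finset.prod_le_prod (s := Finset.Ico 1 (k+1))
    (f := fun i => a ρ n i) (g := fun _ => 1+ρ+(k:ℝ)/n)
    (fun i _ => le_of_lt (a_pos ρ hρ n i))
    (fun i hi => by
      simp only [Finset.mem_Ico] at hi
      have hik : (i:ℝ) ≤ (k:ℝ) := by exact_mod_cast (by omega : i ≤ k)
      have hn0 : (0:ℝ) < n := by exact_mod_cast (by omega : 0 < n)
      have : (i:ℝ)/n ≤ (k:ℝ)/n := by gcongr
      show a ρ n i ≤ 1+ρ+(k:ℝ)/n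
      unfold a; linarith)
  rw [Finset.prod_const, Nat.card_Ico] at h
  simpa [P] using h

lemma P_ge (ρ : ℝ) (hρ : 0 < ρ) (n k : ℕ) :
    (1+ρ)^k ≤ P ρ n 1 (k+1) := by
  have h := Finset.prod_le_prod (s := Finset.Ico 1 (k+1))
    (f := fun _ => 1+ρ) (g := fun i => a ρ n i)
    (fun i _ => by show (0:ℝ) ≤ 1+ρ; linarith)
    (fun i _ => by
      have : (0:ℝ) ≤ (i:ℝ)/n := by positivity
      show (1:ℝ)+ρ ≤ a ρ n i
      unfold a; linarith)
  rw [Finset.prod_const, Nat.card_Ico] at h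
  simpa [P] using h

end RingFreshAux

namespace RingFreshAux

lemma nG_bounds (ρ : ℝ) (hρ : 0 < ρ) (n : ℕ) (hn : 2 ≤ n) :
    (∑ k ∈ range n, (k:ℝ)*(1/(1+ρ))^k) - (∑ k ∈ range n, (k:ℝ)^3*(1/(1+ρ))^k)/n
      ≤ (n:ℝ) * G ρ n 1 ∧
    (n:ℝ) * G ρ n 1 ≤ (∑ k ∈ range n, (k:ℝ)*(1/(1+ρ))^k) + (n:ℝ)*(1/(1+ρ))^n := by
  obtain ⟨m, rfl⟩ : ∃ m, n = m + 1 := ⟨n-1, by omega⟩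
  set n := m + 1 with hnm
  have hρ1 : (0:ℝ) < 1 + ρ := by linarith
  have hn0 : (n:ℝ) ≠ 0 := by positivity
  set q : ℝ := 1/(1+ρ) with hq
  have hq0 : 0 < q := by positivity
  -- expansion of n * G
  have expand : (n:ℝ) * G ρ n 1
      = (∑ k ∈ Finset.Ico 1 n, (k:ℝ)/P ρ n 1 (k+1)) + ((n:ℝ)/(1+ρ))/P ρ n 1 n := by
    unfold G
    rw [mul_add, Finset.mul_sum]
    congr 1
    · apply Finset.sum_congr rfl
      intro k hk
      have hP := (P_pos ρ hρ n 1 (k+1)).ne'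
      field_simp
    · have hP := (P_pos ρ hρ n 1 n).ne'
      field_simp
  have sum_shift : ∀ g : ℕ → ℝ, g 0 = 0 →
      ∑ k ∈ Finset.Ico 1 n, g k = ∑ k ∈ range n, g k := by
    intro g hg
    rw [Finset.range_eq_Ico, Finset.sum_eq_sum_Ico_succ_bot (by omega : 0 < n), hg, zero_add]
  have hqk : ∀ k : ℕ, q^k = ((1+ρ)^k)⁻¹ := by
    intro k; rw [hq, one_div, inv_pow]
  constructor
  · -- lower bound
    calc (∑ k ∈ range n, (k:ℝ)*q^k) - (∑ k ∈ range n, (k:ℝ)^3*q^k)/n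
        = ∑ k ∈ range n, ((k:ℝ)*q^k - (k:ℝ)^3*q^k/n) := by
          rw [Finset.sum_sub_distrib, Finset.sum_div]
      _ = ∑ k ∈ Finset.Ico 1 n, ((k:ℝ)*q^k - (k:ℝ)^3*q^k/n) := by
          rw [sum_shift _ (by norm_num)]
      _ ≤ ∑ k ∈ Finset.Ico 1 n, (k:ℝ)/P ρ n 1 (k+1) := by
          apply Finset.sum_le_sum
          intro k hk
          have hc : (0:ℝ) ≤ (k:ℝ)/n := by positivity
          have hb := bern ρ hρ k ((k:ℝ)/n) hc
          have hPle := P_le ρ hρ n k (by omega)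
          have hPpos := P_pos ρ hρ n 1 (k+1)
          have hinv : ((1+ρ+(k:ℝ)/n)^k)⁻¹ ≤ (P ρ n 1 (k+1))⁻¹ := by
            apply inv_anti₀ hPpos hPle
          have hchain : q^k*(1-(k:ℝ)*((k:ℝ)/n)) ≤ (P ρ n 1 (k+1))⁻¹ := le_trans hb hinv
          have hsame : (k:ℝ)*q^k - (k:ℝ)^3*q^k/n
              = (k:ℝ)*(q^k*(1-(k:ℝ)*((k:ℝ)/n))) := by ring
          rw [hsame, div_eq_mul_inv]
          exact mul_le_mul_of_nonneg_left hchain (Nat.cast_nonneg k)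
      _ ≤ (∑ k ∈ Finset.Ico 1 n, (k:ℝ)/P ρ n 1 (k+1)) + ((n:ℝ)/(1+ρ))/P ρ n 1 n := by
          apply le_add_of_nonneg_right
          have := P_pos ρ hρ n 1 n
          positivity
      _ = (n:ℝ) * G ρ n 1 := expand.symm
  · -- upper bound
    rw [expand]
    have h1 : ∑ k ∈ Finset.Ico 1 n, (k:ℝ)/P ρ n 1 (k+1)
        ≤ ∑ k ∈ range n, (k:ℝ)*q^k := by
      rw [← sum_shift (fun k => (k:ℝ)*q^k) (by norm_num)]
      apply Finset.sum_le_sum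
      intro k hk
      have hPpos := P_pos ρ hρ n 1 (k+1)
      have hge := P_ge ρ hρ n k
      have : (P ρ n 1 (k+1))⁻¹ ≤ ((1+ρ)^k)⁻¹ := by
        apply inv_anti₀ (by positivity) hge
      rw [div_eq_mul_inv]
      calc (k:ℝ) * (P ρ n 1 (k+1))⁻¹ ≤ (k:ℝ) * ((1+ρ)^k)⁻¹ :=
            mul_le_mul_of_nonneg_left this (Nat.cast_nonneg k)
        _ = (k:ℝ)*q^k := by rw [hqk]
    have h2 : ((n:ℝ)/(1+ρ))/P ρ n 1 n ≤ (n:ℝ)*q^n := by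
      have hge : (1+ρ)^m ≤ P ρ n 1 n := P_ge ρ hρ n m
      have hnum : (0:ℝ) ≤ (n:ℝ)/(1+ρ) := by positivity
      have step1 : ((n:ℝ)/(1+ρ))/P ρ n 1 n ≤ ((n:ℝ)/(1+ρ))/((1+ρ)^m) :=
        div_le_div_of_nonneg_left hnum (pow_pos hρ1 m) hge
      have step2 : ((n:ℝ)/(1+ρ))/((1+ρ)^m) = (n:ℝ)*q^n := by
        rw [hq, hnm]
        push_cast
        rw [div_pow, one_pow, pow_succ, div_div, div_eq_mul_inv, div_eq_mul_inv]
        ring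
      linarith [step1, step2.le, step2.ge]
    linarith

end RingFreshAux

open RingFreshAux

/-- In a ring network the average freshness of a single node decreases to 0 as
`(1/ρ + 1/ρ²) * n⁻¹`: if for every `n ≥ 2` the values `F n j` satisfy the ring
recursion `F n n = 1/(1+ρ)` and `F n j = (j/n + F n (j+1))/(1+ρ+j/n)` for
`1 ≤ j ≤ n-1`, then `n * F n 1 → 1/ρ + 1/ρ²`. -/
theorem ring_freshness_scaling
    (ρ : ℝ) (hρ : 0 < ρ)
    (F : ℕ → ℕ → ℝ)
    (hFn : ∀ n : ℕ, 2 ≤ n → F n n = 1 / (1 + ρ))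
    (hFrec : ∀ n : ℕ, 2 ≤ n → ∀ j : ℕ, 1 ≤ j → j ≤ n - 1 →
      F n j = ((j : ℝ) / n + F n (j + 1)) / (1 + ρ + (j : ℝ) / n)) :
    Filter.Tendsto (fun n : ℕ => (n : ℝ) * F n 1) Filter.atTop
      (nhds (1 / ρ + 1 / ρ ^ 2)) := by
  have hρ1 : (0:ℝ) < 1 + ρ := by linarith
  set q : ℝ := 1/(1+ρ) with hq
  have hq0 : 0 < q := by positivity
  have hq1 : q < 1 := by
    rw [hq, div_lt_one hρ1]; linarith
  have hqnorm : ‖q‖ < 1 := by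
    rw [Real.norm_eq_abs, abs_of_pos hq0]; exact hq1
  have hL : (∑' k : ℕ, (k:ℝ) * q ^ k) = 1/ρ + 1/ρ^2 := by
    rw [tsum_coe_mul_geometric_of_norm_lt_one hqnorm, hq]
    have h0 : ρ ≠ 0 := ne_of_gt hρ
    have h1 : (1:ℝ)+ρ ≠ 0 := ne_of_gt hρ1
    rw [show (1:ℝ) - 1/(1+ρ) = ρ/(1+ρ) by field_simp; ring]
    field_simp
    ring
  have hsum1 : Summable (fun k : ℕ => (k:ℝ) * q ^ k) := by
    have := summable_pow_mul_geometric_of_norm_lt_one (k := 1) hqnorm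
    simpa using this
  have hS : Filter.Tendsto (fun n => ∑ k ∈ Finset.range n, (k:ℝ)*q^k)
      Filter.atTop (nhds (1/ρ + 1/ρ^2)) := by
    rw [← hL]
    exact hsum1.hasSum.tendsto_sum_nat
  have hsum3 : Summable (fun k : ℕ => (k:ℝ)^3 * q ^ k) :=
    summable_pow_mul_geometric_of_norm_lt_one 3 hqnorm
  have hTn : Filter.Tendsto
      (fun n : ℕ => (∑ k ∈ Finset.range n, (k:ℝ)^3*q^k)/n) Filter.atTop (nhds 0) := by
    apply squeeze_zero (g := fun n : ℕ => (∑' k : ℕ, (k:ℝ)^3*q^k)/n)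
    · intro n
      apply div_nonneg _ (Nat.cast_nonneg n)
      apply Finset.sum_nonneg
      intro k _
      positivity
    · intro n
      apply div_le_div_of_nonneg_right _ (Nat.cast_nonneg n)
      exact Summable.sum_le_tsum _ (fun k _ => by positivity) hsum3
    · exact tendsto_const_div_atTop_nhds_zero_nat _
  have hnqn : Filter.Tendsto (fun n : ℕ => (n:ℝ)*q^n) Filter.atTop (nhds 0) :=
    hsum1.tendsto_atTop_zero
  have hFG : ∀ n : ℕ, 2 ≤ n → F n 1 = G ρ n 1 := by
    intro n hn
    exact F_eq_G ρ n (F n) hn (hFn n hn) (hFrec n hn)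
  have hlow : Filter.Tendsto
      (fun n : ℕ => (∑ k ∈ Finset.range n, (k:ℝ)*q^k)
        - (∑ k ∈ Finset.range n, (k:ℝ)^3*q^k)/n) Filter.atTop (nhds (1/ρ + 1/ρ^2)) := by
    have := hS.sub hTn
    simpa using this
  have hup : Filter.Tendsto
      (fun n : ℕ => (∑ k ∈ Finset.range n, (k:ℝ)*q^k) + (n:ℝ)*q^n)
      Filter.atTop (nhds (1/ρ + 1/ρ^2)) := by
    have := hS.add hnqn
    simpa using this
  apply tendsto_of_tendsto_of_tendsto_of_le_of_le' hlow hup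
  · filter_upwards [Filter.eventually_ge_atTop 2] with n hn
    rw [hFG n hn]
    exact (nG_bounds ρ hρ n hn).1
  · filter_upwards [Filter.eventually_ge_atTop 2] with n hn
    rw [hFG n hn]
    exact (nG_bounds ρ hρ n hn).2
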